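/- In the one-dimensional periodic coarse-graining setting with M even, with combined Hamiltonian H = H^s + H^l: for every coarse configuration η with F⁻¹(η) ≠ ∅, the exact coarse-grained Hamiltonian H̄_M(η), defined by e^{−βH̄_M(η)} = E[e^{−βH(σ)} | F(σ) = η] (expectation under the uniform measure on {σ : F(σ)=η}), satisfies the exact representation e^{−βH̄_M(η)} = e^{−βH̄^{(0)}_M(η)} · Σ_{σ : F(σ)=η} ( ∏_{0 ≤ j ≤ k ≤ M−1} (1 + f^l_{jk}(σ)) · ∏_{k odd} (1 + f^s_{k−1,k+1}(η(k); σ^{k−1}, σ^{k+1})) ) ν(σ|η), where e^{−βH̄^{(0)}_M(η)} = e^{−βH̄^{l,(0)}(η)} · ∏_{k odd} Z_k(η(k); 0, 0)^{−1} · ∏_{k even} Z_{k−1,k,k+1}(η; 0, 0), and f^l_{jk}(σ) = e^{−βΔ_{jk}J(σ)} − 1. -/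

import Mathlib

open Finset

/-- The spin value of a site: `true ↦ +1`, `false ↦ -1`. -/
def spin (b : Bool) : ℤ := if b then 1 else -1

/-- The coarse cell `C_k = {kQ, …, (k+1)Q - 1}` inside the lattice `Fin (M*Q)`. -/
def cell (M Q : ℕ) (k : Fin M) : Finset (Fin (M * Q)) :=
  univ.filter (fun x => x.val / Q = k.val)

/-- The coarse-graining map `F(σ)(k) = Σ_{x ∈ C_k} σ(x)`. -/
def cg (M Q : ℕ) (σ : Fin (M * Q) → Bool) (k : Fin M) : ℤ :=
  ∑ x ∈ cell M Q k, spin (σ x)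

/-- Configurations of the coarse cell `C_k` with total magnetization `m`. -/
def cellCfgs (M Q : ℕ) (k : Fin M) (m : ℤ) :
    Finset ({x : Fin (M * Q) // x ∈ cell M Q k} → Bool) :=
  univ.filter (fun τ => ∑ x, spin (τ x) = m)

/-- The configuration obtained from `σ` by replacing its values on the cell `C_k`
by the cell configuration `τ`. -/
def upd (M Q : ℕ) (k : Fin M) (σ : Fin (M * Q) → Bool)
    (τ : {x : Fin (M * Q) // x ∈ cell M Q k} → Bool) : Fin (M * Q) → Bool :=
  fun x => if h : x ∈ cell M Q k then τ ⟨x, h⟩ else σ x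

noncomputable section

variable (M Q : ℕ) [NeZero M] (β : ℝ)
  (HK WK : Fin M → (Fin (M * Q) → Bool) → ℝ) (η : Fin M → ℤ)

/-- `Z_k(η(k); σ^{k-1}, σ^{k+1})`: the single-cell partition function of `C_k` with
boundary conditions given by `σ` on the neighbouring cells (cell indices mod `M`). -/
def Zfull (k : Fin M) (σ : Fin (M * Q) → Bool) : ℝ :=
  (∑ τ ∈ cellCfgs M Q k (η k),
      Real.exp (-β * (WK (k - 1) (upd M Q k σ τ) + HK k (upd M Q k σ τ) +
        WK k (upd M Q k σ τ))))
    / ((cellCfgs M Q k (η k)).card : ℝ)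

/-- `Z_k(η(k); σ^{k-1}, 0)`: boundary condition on the left, free on the right. -/
def ZfreeR (k : Fin M) (σ : Fin (M * Q) → Bool) : ℝ :=
  (∑ τ ∈ cellCfgs M Q k (η k),
      Real.exp (-β * (WK (k - 1) (upd M Q k σ τ) + HK k (upd M Q k σ τ))))
    / ((cellCfgs M Q k (η k)).card : ℝ)

/-- `Z_k(η(k); 0, σ^{k+1})`: free on the left, boundary condition on the right. -/
def ZfreeL (k : Fin M) (σ : Fin (M * Q) → Bool) : ℝ :=
  (∑ τ ∈ cellCfgs M Q k (η k),
      Real.exp (-β * (HK k (upd M Q k σ τ) + WK k (upd M Q k σ τ))))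
    / ((cellCfgs M Q k (η k)).card : ℝ)

/-- `Z_k(η(k); 0, 0)`: the free-boundary single-cell partition function. -/
def Zzero (k : Fin M) : ℝ :=
  (∑ τ ∈ cellCfgs M Q k (η k),
      Real.exp (-β * HK k (upd M Q k (fun _ => false) τ)))
    / ((cellCfgs M Q k (η k)).card : ℝ)

/-- `Z_{k-1,k,k+1}(η; 0, 0)`: the three-cell free-boundary partition function. -/
def Z3 (k : Fin M) : ℝ :=
  (∑ τm ∈ cellCfgs M Q (k - 1) (η (k - 1)), ∑ τ ∈ cellCfgs M Q k (η k),
      ∑ τp ∈ cellCfgs M Q (k + 1) (η (k + 1)),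
      (let ρ := upd M Q (k + 1)
          (upd M Q k (upd M Q (k - 1) (fun _ => false) τm) τ) τp
       Real.exp (-β * (HK (k - 1) ρ + WK (k - 1) ρ + HK k ρ + WK k ρ + HK (k + 1) ρ))))
    / (((cellCfgs M Q (k - 1) (η (k - 1))).card : ℝ) *
       ((cellCfgs M Q k (η k)).card : ℝ) *
       ((cellCfgs M Q (k + 1) (η (k + 1))).card : ℝ))

/-- The reference conditional measure `ν(σ|η)` of the multiscale decomposition. -/
def nuM (σ : Fin (M * Q) → Bool) : ℝ :=
  (∏ k ∈ univ.filter (fun k : Fin M => k.val % 2 = 1),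
      Real.exp (-β * (HK k σ + WK (k - 1) σ + WK k σ)) / Zfull M Q β HK WK η k σ
        / ((cellCfgs M Q k (η k)).card : ℝ))
  *
  ∏ k ∈ univ.filter (fun k : Fin M => k.val % 2 = 0),
      Real.exp (-β * HK k σ) * ZfreeR M Q β HK WK η (k + 1) σ *
          ZfreeL M Q β HK WK η (k - 1) σ
        / Z3 M Q β HK WK η k / ((cellCfgs M Q k (η k)).card : ℝ)

/-- The short-range error term `f^s_{k-1,k+1}(η(k); σ^{k-1}, σ^{k+1})`. -/
def fsOdd (k : Fin M) (σ : Fin (M * Q) → Bool) : ℝ :=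
  Zfull M Q β HK WK η k σ * Zzero M Q β HK η k /
    (ZfreeL M Q β HK WK η k σ * ZfreeR M Q β HK WK η k σ) - 1

end

/-- The long-range Hamiltonian `H^l(σ) = -(1/2) Σ_{x ≠ y} J(x-y) σ(x) σ(y)`. -/
noncomputable def Hlong (M Q : ℕ) (J : ℤ → ℝ) (σ : Fin (M * Q) → Bool) : ℝ :=
  -(1 / 2) * ∑ x : Fin (M * Q), ∑ y ∈ univ.filter (fun y => y ≠ x),
    J ((x.val : ℤ) - (y.val : ℤ)) * (spin (σ x) : ℝ) * (spin (σ y) : ℝ)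

/-- Cell-averaged couplings `J̄(k,l)`. -/
noncomputable def Jbar (M Q : ℕ) (J : ℤ → ℝ) (k l : Fin M) : ℝ :=
  if k = l then
    (∑ x ∈ cell M Q k, ∑ y ∈ (cell M Q k).filter (fun y => y ≠ x),
        J ((x.val : ℤ) - (y.val : ℤ))) / ((Q : ℝ) * ((Q : ℝ) - 1))
  else
    (∑ x ∈ cell M Q k, ∑ y ∈ cell M Q l, J ((x.val : ℤ) - (y.val : ℤ))) / ((Q : ℝ) ^ 2)

/-- The coarse-grained long-range Hamiltonian `H̄^{l,(0)}(η)`. -/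
noncomputable def Hlong0 (M Q : ℕ) (J : ℤ → ℝ) (η : Fin M → ℤ) : ℝ :=
  -(1 / 2) * (∑ k : Fin M, ∑ l ∈ univ.filter (fun l => l ≠ k),
      Jbar M Q J k l * (η k : ℝ) * (η l : ℝ))
  - (1 / 2) * ∑ k : Fin M, Jbar M Q J k k * ((η k : ℝ) ^ 2 - (Q : ℝ))

/-- The pair term `Δ_{jk}J(σ)` of the decomposition of `H^l - H̄^{l,(0)} ∘ F`. -/
noncomputable def DeltaJ (M Q : ℕ) (J : ℤ → ℝ) (k l : Fin M)
    (σ : Fin (M * Q) → Bool) : ℝ :=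
  -(1 / 2) * (2 - if k = l then 1 else 0) *
    ∑ x ∈ cell M Q k, ∑ y ∈ (cell M Q l).filter (fun y => y ≠ x),
      (J ((x.val : ℤ) - (y.val : ℤ)) - Jbar M Q J k l) * (spin (σ x) : ℝ) * (spin (σ y) : ℝ)

section Aux
open Finset

lemma mem_cell {M Q : ℕ} {k : Fin M} {x : Fin (M * Q)} :
    x ∈ cell M Q k ↔ x.val / Q = k.val := by simp [cell]

lemma div_lt_of_lt_mul' {M Q : ℕ} (hQ : 0 < Q) {x : ℕ} (hx : x < M * Q) :
    x / Q < M := Nat.div_lt_of_lt_mul (by rwa [mul_comm] at hx)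

lemma card_cell {M Q : ℕ} (hQ : 0 < Q) (k : Fin M) : (cell M Q k).card = Q := by
  conv_rhs => rw [← Finset.card_range Q]
  refine Finset.card_bij' (fun x _ => x.val % Q)
    (fun i hi => (⟨k.val * Q + i, by
      have h1 : i < Q := Finset.mem_range.mp hi
      calc k.val * Q + i < k.val * Q + Q := Nat.add_lt_add_left h1 _
        _ = (k.val + 1) * Q := by ring
        _ ≤ M * Q := Nat.mul_le_mul_right _ k.isLt⟩ : Fin (M * Q)))
    ?_ ?_ ?_ ?_
  · intro x hx
    exact Finset.mem_range.mpr (Nat.mod_lt _ hQ)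
  · intro i hi
    have h1 : i < Q := Finset.mem_range.mp hi
    rw [mem_cell]
    show (k.val * Q + i) / Q = k.val
    show (k.val * Q + i) / Q = k.val
    rw [mul_comm, Nat.mul_add_div hQ, Nat.div_eq_of_lt h1, add_zero]
  · intro x hx
    rw [mem_cell] at hx
    apply Fin.ext
    simp only
    rw [← hx]
    exact Nat.div_add_mod' x.val Q
  · intro i hi
    have h1 : i < Q := Finset.mem_range.mp hi
    show (k.val * Q + i) % Q = i
    rw [mul_comm]
    simp [Nat.mul_add_mod, Nat.mod_eq_of_lt h1]

lemma sum_cells {M Q : ℕ} (hQ : 0 < Q) {β' : Type*} [AddCommMonoid β']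
    (f : Fin (M * Q) → β') :
    ∑ x, f x = ∑ k : Fin M, ∑ x ∈ cell M Q k, f x := by
  rw [← Finset.sum_fiberwise univ (fun x : Fin (M * Q) =>
    (⟨x.val / Q, div_lt_of_lt_mul' hQ x.isLt⟩ : Fin M)) f]
  refine Finset.sum_congr rfl fun k _ => Finset.sum_congr ?_ fun _ _ => rfl
  ext x
  simp [cell, Fin.ext_iff]

lemma spin_mul_self (b : Bool) : ((spin b : ℤ) : ℝ) * ((spin b : ℤ) : ℝ) = 1 := by
  cases b <;> simp [spin]

end Aux
section Aux2
open Finset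

variable {M : ℕ} [NeZero M]

lemma fin_sub_one_val (hM : 2 ≤ M) (k : Fin M) (hk : k.val ≠ 0) :
    (k - 1).val = k.val - 1 := by
  have h1 : (1 : Fin M).val = 1 := by
    rw [Fin.val_one']
    exact Nat.mod_eq_of_lt (by omega)
  rw [Fin.sub_def]
  simp only [h1]
  show (M - 1 + k.val) % M = k.val - 1
  have hkM := k.isLt
  have h2 : M - 1 + k.val = (k.val - 1) + M := by omega
  rw [h2, Nat.add_mod_right]
  exact Nat.mod_eq_of_lt (by omega)

lemma fin_add_one_val (k : Fin M) (hk : k.val + 1 < M) :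
    (k + 1).val = k.val + 1 := by
  have h1 : (1 : Fin M).val = 1 := by
    rw [Fin.val_one']
    exact Nat.mod_eq_of_lt (by omega)
  rw [Fin.add_def, h1]
  exact Nat.mod_eq_of_lt hk

lemma even_add_one_lt (hM2 : M % 2 = 0) {k : Fin M} (hk : k.val % 2 = 0) :
    k.val + 1 < M := by
  have := k.isLt
  omega

lemma filter_odd_eq_image (hM : 2 ≤ M) (hM2 : M % 2 = 0) :
    (univ.filter (fun k : Fin M => k.val % 2 = 1)) =
      Finset.image (· + 1) (univ.filter (fun k : Fin M => k.val % 2 = 0)) := by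
  ext k
  simp only [mem_filter, mem_univ, true_and, mem_image]
  constructor
  · intro hk
    refine ⟨k - 1, ?_, by rw [sub_add_cancel]⟩
    rw [fin_sub_one_val hM k (by omega)]
    omega
  · rintro ⟨j, hj, rfl⟩
    rw [fin_add_one_val j (even_add_one_lt hM2 hj)]
    omega

lemma filter_even_eq_image (hM : 2 ≤ M) (hM2 : M % 2 = 0) :
    (univ.filter (fun k : Fin M => k.val % 2 = 0)) =
      Finset.image (· - 1) (univ.filter (fun k : Fin M => k.val % 2 = 1)) := by
  ext k
  simp only [mem_filter, mem_univ, true_and, mem_image]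
  constructor
  · intro hk
    refine ⟨k + 1, ?_, by rw [add_sub_cancel_right]⟩
    rw [fin_add_one_val k (even_add_one_lt hM2 hk)]
    omega
  · rintro ⟨j, hj, rfl⟩
    rw [fin_sub_one_val hM j (by omega)]
    omega

lemma add_one_injective : Function.Injective (fun k : Fin M => k + 1) :=
  fun a b h => by
    have := congrArg (fun x : Fin M => x - 1) h
    simpa [add_sub_cancel_right] using this

lemma sub_one_injective : Function.Injective (fun k : Fin M => k - 1) :=
  fun a b h => by
    have := congrArg (fun x : Fin M => x + 1) h
    simpa [sub_add_cancel] using this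

end Aux2
section Aux3
open Finset

variable {M Q : ℕ}

lemma mem_cellCfgs {k : Fin M} {m : ℤ} {τ : {x : Fin (M * Q) // x ∈ cell M Q k} → Bool} :
    τ ∈ cellCfgs M Q k m ↔ ∑ x, spin (τ x) = m := by simp only [cellCfgs, Finset.mem_filter, Finset.mem_univ, true_and]

lemma sum_spin_subtype (k : Fin M) (σ : Fin (M * Q) → Bool) :
    ∑ x : {x : Fin (M * Q) // x ∈ cell M Q k}, spin (σ x.val)
      = ∑ x ∈ cell M Q k, spin (σ x) :=
  Finset.sum_coe_sort (cell M Q k) (fun x => spin (σ x))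

lemma cellCfgs_nonempty {η : Fin M → ℤ} {σ : Fin (M * Q) → Bool}
    (hσ : cg M Q σ = η) (k : Fin M) : (cellCfgs M Q k (η k)).Nonempty := by
  refine ⟨fun x => σ x.val, mem_cellCfgs.mpr ?_⟩
  rw [sum_spin_subtype k σ]
  exact congrFun hσ k

lemma cellCfgs_card_pos {η : Fin M → ℤ} {σ : Fin (M * Q) → Bool}
    (hσ : cg M Q σ = η) (k : Fin M) : (0 : ℝ) < ((cellCfgs M Q k (η k)).card : ℝ) := by
  exact_mod_cast Finset.card_pos.mpr (cellCfgs_nonempty hσ k)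

private lemma f_congr (f : ∀ k : Fin M, {x : Fin (M * Q) // x ∈ cell M Q k} → Bool)
    {k k' : Fin M} (h : k = k') (x : Fin (M * Q)) (hx : x ∈ cell M Q k)
    (hx' : x ∈ cell M Q k') : f k ⟨x, hx⟩ = f k' ⟨x, hx'⟩ := by subst h; rfl

lemma card_fiber (hQ : 0 < Q) (η : Fin M → ℤ) :
    (univ.filter (fun σ : Fin (M * Q) → Bool => cg M Q σ = η)).card
      = ∏ k, (cellCfgs M Q k (η k)).card := by
  rw [← Fintype.card_piFinset]
  refine Finset.card_nbij' (fun σ => fun k x => σ x.val)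
    (fun f => fun x => f ⟨x.val / Q, div_lt_of_lt_mul' hQ x.isLt⟩ ⟨x, mem_cell.mpr rfl⟩)
    ?_ ?_ ?_ ?_
  · intro σ hσ
    rw [Finset.mem_coe, Finset.mem_filter] at hσ
    rw [Finset.mem_coe, Fintype.mem_piFinset]
    intro k
    rw [mem_cellCfgs, sum_spin_subtype k σ]
    exact congrFun hσ.2 k
  · intro f hf
    rw [Finset.mem_coe, Fintype.mem_piFinset] at hf
    rw [Finset.mem_coe, Finset.mem_filter]
    refine ⟨Finset.mem_univ _, ?_⟩
    funext k
    show (∑ x ∈ cell M Q k, spin _) = η k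
    rw [← Finset.sum_coe_sort (cell M Q k)]
    have : ∀ x : {x : Fin (M * Q) // x ∈ cell M Q k},
        f ⟨x.val.val / Q, div_lt_of_lt_mul' hQ x.val.isLt⟩ ⟨x.val, mem_cell.mpr rfl⟩
          = f k x := by
      intro x
      have hk : (⟨x.val.val / Q, div_lt_of_lt_mul' hQ x.val.isLt⟩ : Fin M) = k :=
        Fin.ext (mem_cell.mp x.prop)
      rw [f_congr f hk x.val (mem_cell.mpr rfl) x.prop]
    calc ∑ x : {x : Fin (M * Q) // x ∈ cell M Q k},
          spin (f ⟨x.val.val / Q, div_lt_of_lt_mul' hQ x.val.isLt⟩ ⟨x.val, mem_cell.mpr rfl⟩)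
        = ∑ x : {x : Fin (M * Q) // x ∈ cell M Q k}, spin (f k x) := by
          exact Finset.sum_congr rfl fun x _ => by rw [this x]
      _ = η k := mem_cellCfgs.mp (hf k)
  · intro σ hσ
    rfl
  · intro f hf
    funext k x
    show f ⟨x.val.val / Q, _⟩ ⟨x.val, _⟩ = f k x
    have hk : (⟨x.val.val / Q, div_lt_of_lt_mul' hQ x.val.isLt⟩ : Fin M) = k :=
      Fin.ext (mem_cell.mp x.prop)
    rw [f_congr f hk x.val (mem_cell.mpr rfl) x.prop]

end Aux3
section Aux4
open Finset

variable {M Q : ℕ}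

lemma sum_spin_cell {η : Fin M → ℤ} {σ : Fin (M * Q) → Bool} (hσ : cg M Q σ = η)
    (k : Fin M) : ∑ x ∈ cell M Q k, ((spin (σ x) : ℤ) : ℝ) = ((η k : ℤ) : ℝ) := by
  have h := congrFun hσ k
  calc ∑ x ∈ cell M Q k, ((spin (σ x) : ℤ) : ℝ)
      = (((∑ x ∈ cell M Q k, spin (σ x)) : ℤ) : ℝ) := by push_cast; rfl
    _ = ((η k : ℤ) : ℝ) := by exact_mod_cast congrArg (fun z : ℤ => (z : ℝ)) h

lemma Jbar_symm (J : ℤ → ℝ) (hJ : ∀ r, J (-r) = J r) (k l : Fin M) :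
    Jbar M Q J k l = Jbar M Q J l k := by
  unfold Jbar
  rcases eq_or_ne k l with rfl | h
  · rfl
  · rw [if_neg h, if_neg h.symm]
    congr 1
    rw [Finset.sum_comm]
    refine Finset.sum_congr rfl fun y _ => Finset.sum_congr rfl fun x _ => ?_
    rw [show ((x.val : ℤ) - (y.val : ℤ)) = -((y.val : ℤ) - (x.val : ℤ)) by ring, hJ]

lemma swap_ne_sum {γ : Type*} [DecidableEq γ] (A B : Finset γ) (f : γ → γ → ℝ) :
    ∑ x ∈ A, ∑ y ∈ B.filter (fun y => y ≠ x), f x y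
      = ∑ y ∈ B, ∑ x ∈ A.filter (fun x => x ≠ y), f x y := by
  simp only [Finset.sum_filter]
  rw [Finset.sum_comm]
  exact Finset.sum_congr rfl fun y _ => Finset.sum_congr rfl fun x _ => by
    simp only [ne_comm]

lemma double_sum_cells (hQ : 0 < Q) (g : Fin (M * Q) → Fin (M * Q) → ℝ) :
    ∑ x : Fin (M * Q), ∑ y ∈ univ.filter (fun y => y ≠ x), g x y
      = ∑ k : Fin M, ∑ l : Fin M, ∑ x ∈ cell M Q k,
          ∑ y ∈ (cell M Q l).filter (fun y => y ≠ x), g x y := by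
  calc ∑ x : Fin (M * Q), ∑ y ∈ univ.filter (fun y => y ≠ x), g x y
      = ∑ k : Fin M, ∑ x ∈ cell M Q k, ∑ l : Fin M,
          ∑ y ∈ (cell M Q l).filter (fun y => y ≠ x), g x y := by
        rw [sum_cells hQ (f := fun x => ∑ y ∈ univ.filter (fun y => y ≠ x), g x y)]
        refine Finset.sum_congr rfl fun k _ => Finset.sum_congr rfl fun x _ => ?_
        rw [Finset.sum_filter, sum_cells hQ]
        exact Finset.sum_congr rfl fun l _ => (Finset.sum_filter _ _).symm
    _ = _ := Finset.sum_congr rfl fun k _ => Finset.sum_comm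

lemma sum_pairs {M : ℕ} (T : Fin M → Fin M → ℝ) (hT : ∀ k l, T k l = T l k) :
    ∑ k, ∑ l, T k l
      = ∑ p ∈ (univ ×ˢ univ : Finset (Fin M × Fin M)).filter (fun p => p.1 ≤ p.2),
          (2 - if p.1 = p.2 then 1 else 0) * T p.1 p.2 := by
  have h1 : ∑ k, ∑ l, T k l = ∑ p ∈ (univ ×ˢ univ : Finset (Fin M × Fin M)), T p.1 p.2 := by
    rw [Finset.sum_product]
  have h2 := Finset.sum_filter_add_sum_filter_not
    (univ ×ˢ univ : Finset (Fin M × Fin M)) (fun p => p.1 ≤ p.2) (fun p => T p.1 p.2)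
  have h3 : ∑ p ∈ (univ ×ˢ univ : Finset (Fin M × Fin M)).filter (fun p => ¬ p.1 ≤ p.2),
      T p.1 p.2
      = ∑ p ∈ (univ ×ˢ univ : Finset (Fin M × Fin M)).filter (fun p => p.1 < p.2),
          T p.1 p.2 := by
    refine Finset.sum_nbij' Prod.swap Prod.swap ?_ ?_ ?_ ?_ ?_
    · intro p hp
      simp only [Finset.mem_filter, Finset.mem_product, Finset.mem_univ, true_and,
        and_true, not_le] at hp ⊢
      exact hp
    · intro p hp
      simp only [Finset.mem_filter, Finset.mem_product, Finset.mem_univ, true_and,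
        and_true, not_le] at hp ⊢
      exact hp
    · intro p _; rfl
    · intro p _; rfl
    · intro p _
      exact hT p.1 p.2
  have h4 : ∑ p ∈ (univ ×ˢ univ : Finset (Fin M × Fin M)).filter (fun p => p.1 ≤ p.2),
      (2 - if p.1 = p.2 then 1 else 0) * T p.1 p.2
      = (∑ p ∈ (univ ×ˢ univ : Finset (Fin M × Fin M)).filter (fun p => p.1 ≤ p.2),
          T p.1 p.2)
        + ∑ p ∈ (univ ×ˢ univ : Finset (Fin M × Fin M)).filter (fun p => p.1 < p.2),
            T p.1 p.2 := by
    have : ∀ p : Fin M × Fin M,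
        (2 - if p.1 = p.2 then 1 else 0) * T p.1 p.2
          = T p.1 p.2 + (if ¬ p.1 = p.2 then T p.1 p.2 else 0) := by
      intro p
      rcases eq_or_ne p.1 p.2 with h | h
      · rw [if_pos h, if_neg (not_not_intro h)]; ring
      · rw [if_neg h, if_pos h]; ring
    rw [Finset.sum_congr rfl fun p _ => this p, Finset.sum_add_distrib]
    congr 1
    rw [← Finset.sum_filter, Finset.filter_filter]
    refine Finset.sum_congr ?_ fun _ _ => rfl
    ext p
    simp only [Finset.mem_filter]
    constructor
    · rintro ⟨h1, h2, h3⟩; exact ⟨h1, lt_of_le_of_ne h2 h3⟩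
    · rintro ⟨h1, h2⟩; exact ⟨h1, le_of_lt h2, ne_of_lt h2⟩
  rw [h1, ← h2, h3, h4]

end Aux4
section Aux5
open Finset

variable {M Q : ℕ}

lemma T_symm (J : ℤ → ℝ) (hJ : ∀ r, J (-r) = J r) (σ : Fin (M * Q) → Bool) (k l : Fin M) :
    ∑ x ∈ cell M Q k, ∑ y ∈ (cell M Q l).filter (fun y => y ≠ x),
        (J ((x.val : ℤ) - (y.val : ℤ)) - Jbar M Q J k l) *
          (spin (σ x) : ℝ) * (spin (σ y) : ℝ)
      = ∑ x ∈ cell M Q l, ∑ y ∈ (cell M Q k).filter (fun y => y ≠ x),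
          (J ((x.val : ℤ) - (y.val : ℤ)) - Jbar M Q J l k) *
            (spin (σ x) : ℝ) * (spin (σ y) : ℝ) := by
  rw [swap_ne_sum]
  refine Finset.sum_congr rfl fun x _ => Finset.sum_congr rfl fun y _ => ?_
  rw [Jbar_symm J hJ k l,
    show ((y.val : ℤ) - (x.val : ℤ)) = -((x.val : ℤ) - (y.val : ℤ)) by ring, hJ]
  ring

lemma U_eval (hQ0 : 0 < Q) {η : Fin M → ℤ} {σ : Fin (M * Q) → Bool}
    (hσ : cg M Q σ = η) (k l : Fin M) :
    ∑ x ∈ cell M Q k, ∑ y ∈ (cell M Q l).filter (fun y => y ≠ x),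
        (spin (σ x) : ℝ) * (spin (σ y) : ℝ)
      = if k = l then (η k : ℝ) ^ 2 - (Q : ℝ) else (η k : ℝ) * (η l : ℝ) := by
  rcases eq_or_ne k l with rfl | h
  · rw [if_pos rfl]
    have hx : ∀ x ∈ cell M Q k,
        ∑ y ∈ (cell M Q k).filter (fun y => y ≠ x),
            (spin (σ x) : ℝ) * (spin (σ y) : ℝ)
          = (spin (σ x) : ℝ) * (η k : ℝ) - 1 := by
      intro x hx
      rw [Finset.filter_ne' (cell M Q k) x, Finset.sum_erase_eq_sub hx, ← Finset.mul_sum,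
        sum_spin_cell hσ k, spin_mul_self]
    rw [Finset.sum_congr rfl hx, Finset.sum_sub_distrib, ← Finset.sum_mul,
      sum_spin_cell hσ k, Finset.sum_const, card_cell hQ0 k]
    simp only [nsmul_eq_mul, mul_one]
    ring
  · rw [if_neg h]
    have hfil : ∀ x ∈ cell M Q k,
        (cell M Q l).filter (fun y => y ≠ x) = cell M Q l := by
      intro x hx
      refine Finset.filter_eq_self.mpr fun y hy => ?_
      intro hyx
      exact h (Fin.ext (by rw [← mem_cell.mp hx, ← mem_cell.mp hy, hyx]))
    calc ∑ x ∈ cell M Q k, ∑ y ∈ (cell M Q l).filter (fun y => y ≠ x),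
            (spin (σ x) : ℝ) * (spin (σ y) : ℝ)
        = ∑ x ∈ cell M Q k, ∑ y ∈ cell M Q l,
            (spin (σ x) : ℝ) * (spin (σ y) : ℝ) :=
          Finset.sum_congr rfl fun x hx => by rw [hfil x hx]
      _ = (∑ x ∈ cell M Q k, (spin (σ x) : ℝ)) * ∑ y ∈ cell M Q l, (spin (σ y) : ℝ) :=
          (Finset.sum_mul_sum _ _ _ _).symm
      _ = (η k : ℝ) * (η l : ℝ) := by rw [sum_spin_cell hσ k, sum_spin_cell hσ l]

lemma Hlong_decomp (hQ0 : 0 < Q) (J : ℤ → ℝ) (hJ : ∀ r, J (-r) = J r)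
    (η : Fin M → ℤ) (σ : Fin (M * Q) → Bool) (hσ : cg M Q σ = η) :
    Hlong M Q J σ = Hlong0 M Q J η
      + ∑ p ∈ (univ ×ˢ univ : Finset (Fin M × Fin M)).filter (fun p => p.1 ≤ p.2),
          DeltaJ M Q J p.1 p.2 σ := by
  have hA : Hlong M Q J σ =
      -(1 / 2) * ((∑ k : Fin M, ∑ l : Fin M, ∑ x ∈ cell M Q k,
          ∑ y ∈ (cell M Q l).filter (fun y => y ≠ x),
            (J ((x.val : ℤ) - (y.val : ℤ)) - Jbar M Q J k l) *
              (spin (σ x) : ℝ) * (spin (σ y) : ℝ))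
        + ∑ k : Fin M, ∑ l : Fin M, Jbar M Q J k l *
            (if k = l then (η k : ℝ) ^ 2 - (Q : ℝ) else (η k : ℝ) * (η l : ℝ))) := by
    unfold Hlong
    rw [double_sum_cells hQ0]
    rw [← Finset.sum_add_distrib]
    congr 1
    refine Finset.sum_congr rfl fun k _ => ?_
    rw [← Finset.sum_add_distrib]
    refine Finset.sum_congr rfl fun l _ => ?_
    rw [← U_eval hQ0 hσ k l, Finset.mul_sum, ← Finset.sum_add_distrib]
    refine Finset.sum_congr rfl fun x _ => ?_
    rw [Finset.mul_sum, ← Finset.sum_add_distrib]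
    refine Finset.sum_congr rfl fun y _ => ?_
    ring
  have hC : ∑ p ∈ (univ ×ˢ univ : Finset (Fin M × Fin M)).filter (fun p => p.1 ≤ p.2),
      DeltaJ M Q J p.1 p.2 σ
      = -(1 / 2) * ∑ k : Fin M, ∑ l : Fin M, ∑ x ∈ cell M Q k,
          ∑ y ∈ (cell M Q l).filter (fun y => y ≠ x),
            (J ((x.val : ℤ) - (y.val : ℤ)) - Jbar M Q J k l) *
              (spin (σ x) : ℝ) * (spin (σ y) : ℝ) := by
    rw [sum_pairs _ (fun k l => T_symm J hJ σ k l), Finset.mul_sum]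
    refine Finset.sum_congr rfl fun p _ => ?_
    unfold DeltaJ
    ring
  have hB : Hlong0 M Q J η =
      -(1 / 2) * ∑ k : Fin M, ∑ l : Fin M, Jbar M Q J k l *
          (if k = l then (η k : ℝ) ^ 2 - (Q : ℝ) else (η k : ℝ) * (η l : ℝ)) := by
    unfold Hlong0
    have : ∀ k : Fin M, ∑ l : Fin M, Jbar M Q J k l *
          (if k = l then (η k : ℝ) ^ 2 - (Q : ℝ) else (η k : ℝ) * (η l : ℝ))
        = (∑ l ∈ univ.filter (fun l => l ≠ k),
            Jbar M Q J k l * (η k : ℝ) * (η l : ℝ))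
          + Jbar M Q J k k * ((η k : ℝ) ^ 2 - (Q : ℝ)) := by
      intro k
      rw [← Finset.sum_filter_add_sum_filter_not univ (fun l => l ≠ k)]
      congr 1
      · refine Finset.sum_congr rfl fun l hl => ?_
        rw [Finset.mem_filter] at hl
        rw [if_neg (Ne.symm hl.2)]
        ring
      · have : univ.filter (fun l : Fin M => ¬ l ≠ k) = {k} := by
          ext l; simp
        rw [this, Finset.sum_singleton, if_pos rfl]
    rw [Finset.sum_congr rfl fun k _ => this k, Finset.sum_add_distrib]
    ring
  rw [hA, hB, hC]
  ring

end Aux5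
section Aux6
open Finset

variable {M : ℕ} [NeZero M]

lemma odd_add_one_even (hM : 2 ≤ M) (hM2 : M % 2 = 0) {k : Fin M} (hk : k.val % 2 = 1) :
    ((k + 1 : Fin M)).val % 2 = 0 := by
  have h1 : (1 : Fin M).val = 1 := by
    rw [Fin.val_one']; exact Nat.mod_eq_of_lt (by omega)
  have := k.isLt
  rw [Fin.add_def, h1]
  show (k.val + 1) % M % 2 = 0
  rcases eq_or_ne k.val (M - 1) with h | h
  · rw [h]
    have : M - 1 + 1 = M := by omega
    rw [this, Nat.mod_self]
  · rw [Nat.mod_eq_of_lt (show k.val + 1 < M by omega)]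
    omega

lemma even_sub_one_odd (hM : 2 ≤ M) (hM2 : M % 2 = 0) {k : Fin M} (hk : k.val % 2 = 0) :
    ((k - 1 : Fin M)).val % 2 = 1 := by
  rcases eq_or_ne k.val 0 with h | h
  · have h1 : (1 : Fin M).val = 1 := by
      rw [Fin.val_one']; exact Nat.mod_eq_of_lt (by omega)
    rw [Fin.sub_def, h1, h]
    show (M - 1 + 0) % M % 2 = 1
    rw [Nat.add_zero, Nat.mod_eq_of_lt (show M - 1 < M by omega)]
    omega
  · rw [fin_sub_one_val hM k h]
    have := k.isLt
    omega

lemma filter_odd_eq_image' (hM : 2 ≤ M) (hM2 : M % 2 = 0) :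
    (univ.filter (fun k : Fin M => k.val % 2 = 1)) =
      Finset.image (· - 1) (univ.filter (fun k : Fin M => k.val % 2 = 0)) := by
  ext k
  simp only [mem_filter, mem_univ, true_and, mem_image]
  constructor
  · intro hk
    exact ⟨k + 1, odd_add_one_even hM hM2 hk, by rw [add_sub_cancel_right]⟩
  · rintro ⟨j, hj, rfl⟩
    exact even_sub_one_odd hM hM2 hj

lemma exp_sum_div_card_pos {γ : Type*} {s : Finset γ} (hs : s.Nonempty) (f : γ → ℝ) :
    0 < (∑ τ ∈ s, Real.exp (f τ)) / (s.card : ℝ) :=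
  div_pos (Finset.sum_pos (fun τ _ => Real.exp_pos _) hs)
    (by exact_mod_cast Finset.card_pos.mpr hs)

section ZPos
variable {Q : ℕ} (β : ℝ) (HK WK : Fin M → (Fin (M * Q) → Bool) → ℝ)
  {η : Fin M → ℤ} {σ0 : Fin (M * Q) → Bool}

lemma Zfull_pos (hσ0 : cg M Q σ0 = η) (k : Fin M) (σ : Fin (M * Q) → Bool) : 0 < Zfull M Q β HK WK η k σ :=
  exp_sum_div_card_pos (cellCfgs_nonempty hσ0 k) _

lemma ZfreeR_pos (hσ0 : cg M Q σ0 = η) (k : Fin M) (σ : Fin (M * Q) → Bool) : 0 < ZfreeR M Q β HK WK η k σ :=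
  exp_sum_div_card_pos (cellCfgs_nonempty hσ0 k) _

lemma ZfreeL_pos (hσ0 : cg M Q σ0 = η) (k : Fin M) (σ : Fin (M * Q) → Bool) : 0 < ZfreeL M Q β HK WK η k σ :=
  exp_sum_div_card_pos (cellCfgs_nonempty hσ0 k) _

lemma Zzero_pos (hσ0 : cg M Q σ0 = η) (k : Fin M) : 0 < Zzero M Q β HK η k :=
  exp_sum_div_card_pos (cellCfgs_nonempty hσ0 k) _

lemma Z3_pos (hσ0 : cg M Q σ0 = η) (k : Fin M) : 0 < Z3 M Q β HK WK η k := by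
  unfold Z3
  refine div_pos ?_ ?_
  · refine Finset.sum_pos (fun τm _ => ?_) (cellCfgs_nonempty hσ0 (k - 1))
    refine Finset.sum_pos (fun τ _ => ?_) (cellCfgs_nonempty hσ0 k)
    refine Finset.sum_pos (fun τp _ => ?_) (cellCfgs_nonempty hσ0 (k + 1))
    exact Real.exp_pos _
  · have h1 := cellCfgs_card_pos hσ0 (k - 1)
    have h2 := cellCfgs_card_pos hσ0 k
    have h3 := cellCfgs_card_pos hσ0 (k + 1)
    positivity

end ZPos
end Aux6
section Aux7
open Finset

variable {M Q : ℕ} [NeZero M]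

lemma short_decomp (hM : 2 ≤ M) (hM2 : M % 2 = 0) (β : ℝ)
    (HK WK : Fin M → (Fin (M * Q) → Bool) → ℝ) (η : Fin M → ℤ)
    (σ : Fin (M * Q) → Bool) (hσ : cg M Q σ = η) :
    Real.exp (-β * ((∑ k, HK k σ) + ∑ k, WK k σ))
        / ∏ k, ((cellCfgs M Q k (η k)).card : ℝ)
      = ((∏ k ∈ univ.filter (fun k : Fin M => k.val % 2 = 1), (Zzero M Q β HK η k)⁻¹) *
          ∏ k ∈ univ.filter (fun k : Fin M => k.val % 2 = 0), Z3 M Q β HK WK η k) *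
        ((∏ k ∈ univ.filter (fun k : Fin M => k.val % 2 = 1),
            (1 + fsOdd M Q β HK WK η k σ)) *
          nuM M Q β HK WK η σ) := by
  classical
  have hEvnot : (univ.filter (fun k : Fin M => k.val % 2 = 0)) =
      (univ.filter (fun k : Fin M => ¬ k.val % 2 = 1)) := by
    ext k; simp only [mem_filter, mem_univ, true_and]; omega
  -- nonvanishing
  have hcne : ∀ k : Fin M, ((cellCfgs M Q k (η k)).card : ℝ) ≠ 0 :=
    fun k => ne_of_gt (cellCfgs_card_pos hσ k)
  have hZfne : ∀ k, Zfull M Q β HK WK η k σ ≠ 0 :=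
    fun k => ne_of_gt (Zfull_pos β HK WK hσ k σ)
  have hZRne : ∀ k, ZfreeR M Q β HK WK η k σ ≠ 0 :=
    fun k => ne_of_gt (ZfreeR_pos β HK WK hσ k σ)
  have hZLne : ∀ k, ZfreeL M Q β HK WK η k σ ≠ 0 :=
    fun k => ne_of_gt (ZfreeL_pos β HK WK hσ k σ)
  have hZzne : ∀ k, Zzero M Q β HK η k ≠ 0 :=
    fun k => ne_of_gt (Zzero_pos β HK hσ k)
  have hZ3ne : ∀ k, Z3 M Q β HK WK η k ≠ 0 :=
    fun k => ne_of_gt (Z3_pos β HK WK hσ k)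
  -- split of the Gibbs factor
  have hH : (∑ k, HK k σ) = (∑ k ∈ univ.filter (fun k : Fin M => k.val % 2 = 1), HK k σ)
      + ∑ k ∈ univ.filter (fun k : Fin M => k.val % 2 = 0), HK k σ := by
    rw [hEvnot]; exact (Finset.sum_filter_add_sum_filter_not univ _ _).symm
  have hWm : (∑ k ∈ univ.filter (fun k : Fin M => k.val % 2 = 0), WK k σ)
      = ∑ k ∈ univ.filter (fun k : Fin M => k.val % 2 = 1), WK (k - 1) σ := by
    rw [filter_even_eq_image hM hM2]
    exact Finset.sum_image (fun x _ y _ h => sub_one_injective h)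
  have hW : (∑ k, WK k σ)
      = (∑ k ∈ univ.filter (fun k : Fin M => k.val % 2 = 1), WK (k - 1) σ)
        + ∑ k ∈ univ.filter (fun k : Fin M => k.val % 2 = 1), WK k σ := by
    rw [← hWm, add_comm, hEvnot]
    exact (Finset.sum_filter_add_sum_filter_not univ _ _).symm
  have hLHS : Real.exp (-β * ((∑ k, HK k σ) + ∑ k, WK k σ))
      = (∏ k ∈ univ.filter (fun k : Fin M => k.val % 2 = 1),
          Real.exp (-β * (HK k σ + WK (k - 1) σ + WK k σ))) *
        ∏ k ∈ univ.filter (fun k : Fin M => k.val % 2 = 0),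
          Real.exp (-β * HK k σ) := by
    rw [← Real.exp_sum, ← Real.exp_sum, ← Real.exp_add]
    congr 1
    have e1 : ∑ k ∈ univ.filter (fun k : Fin M => k.val % 2 = 1),
        -β * (HK k σ + WK (k - 1) σ + WK k σ)
        = -β * ((∑ k ∈ univ.filter (fun k : Fin M => k.val % 2 = 1), HK k σ)
          + (∑ k ∈ univ.filter (fun k : Fin M => k.val % 2 = 1), WK (k - 1) σ)
          + ∑ k ∈ univ.filter (fun k : Fin M => k.val % 2 = 1), WK k σ) := by
      rw [← Finset.sum_add_distrib, ← Finset.sum_add_distrib, Finset.mul_sum]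
    have e2 : ∑ k ∈ univ.filter (fun k : Fin M => k.val % 2 = 0), -β * HK k σ
        = -β * ∑ k ∈ univ.filter (fun k : Fin M => k.val % 2 = 0), HK k σ :=
      (Finset.mul_sum _ _ _).symm
    rw [e1, e2, hH, hW]
    ring
  -- card product split
  have hcsplit : (∏ k, ((cellCfgs M Q k (η k)).card : ℝ))
      = (∏ k ∈ univ.filter (fun k : Fin M => k.val % 2 = 1), ((cellCfgs M Q k (η k)).card : ℝ))
        * ∏ k ∈ univ.filter (fun k : Fin M => k.val % 2 = 0),
            ((cellCfgs M Q k (η k)).card : ℝ) := by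
    rw [hEvnot]; exact (Finset.prod_filter_mul_prod_filter_not univ _ _).symm
  -- reindexing of the boundary partition functions
  have hR : (∏ k ∈ univ.filter (fun k : Fin M => k.val % 2 = 1), ZfreeR M Q β HK WK η k σ)
      = ∏ k ∈ univ.filter (fun k : Fin M => k.val % 2 = 0), ZfreeR M Q β HK WK η (k + 1) σ := by
    rw [filter_odd_eq_image hM hM2]
    exact Finset.prod_image (fun x _ y _ h => add_one_injective h)
  have hL : (∏ k ∈ univ.filter (fun k : Fin M => k.val % 2 = 1), ZfreeL M Q β HK WK η k σ)
      = ∏ k ∈ univ.filter (fun k : Fin M => k.val % 2 = 0), ZfreeL M Q β HK WK η (k - 1) σ := by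
    rw [filter_odd_eq_image' hM hM2]
    exact Finset.prod_image (fun x _ y _ h => sub_one_injective h)
  -- the Mayer factors
  have h1p : (∏ k ∈ univ.filter (fun k : Fin M => k.val % 2 = 1),
      (1 + fsOdd M Q β HK WK η k σ))
      = ∏ k ∈ univ.filter (fun k : Fin M => k.val % 2 = 1),
          Zfull M Q β HK WK η k σ * Zzero M Q β HK η k /
            (ZfreeL M Q β HK WK η k σ * ZfreeR M Q β HK WK η k σ) :=
    Finset.prod_congr rfl fun k _ => by unfold fsOdd; ring
  -- split the even factor of nu
  have hsplitEv : (∏ k ∈ univ.filter (fun k : Fin M => k.val % 2 = 0),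
      Real.exp (-β * HK k σ) * ZfreeR M Q β HK WK η (k + 1) σ *
          ZfreeL M Q β HK WK η (k - 1) σ / Z3 M Q β HK WK η k /
          ((cellCfgs M Q k (η k)).card : ℝ))
      = (∏ k ∈ univ.filter (fun k : Fin M => k.val % 2 = 0),
          Real.exp (-β * HK k σ) / Z3 M Q β HK WK η k / ((cellCfgs M Q k (η k)).card : ℝ))
        * (∏ k ∈ univ.filter (fun k : Fin M => k.val % 2 = 0), ZfreeR M Q β HK WK η (k + 1) σ)
        * ∏ k ∈ univ.filter (fun k : Fin M => k.val % 2 = 0), ZfreeL M Q β HK WK η (k - 1) σ := by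
    rw [← Finset.prod_mul_distrib, ← Finset.prod_mul_distrib]
    exact Finset.prod_congr rfl fun k _ => by ring
  unfold nuM
  rw [h1p, hsplitEv, ← hR, ← hL, hLHS, hcsplit]
  rw [show ∀ a1 a2 a3 a4 a5 a6 a7 : ℝ, a1 * a2 * (a3 * (a4 * (a5 * a6 * a7)))
      = (a1 * a3 * a4 * a6 * a7) * (a2 * a5) from fun _ _ _ _ _ _ _ => by ring]
  rw [← Finset.prod_mul_distrib, ← Finset.prod_mul_distrib, ← Finset.prod_mul_distrib,
    ← Finset.prod_mul_distrib, ← Finset.prod_mul_distrib]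
  rw [← div_mul_div_comm, ← Finset.prod_div_distrib, ← Finset.prod_div_distrib]
  refine congrArg₂ (· * ·) (Finset.prod_congr rfl fun k _ => ?_)
    (Finset.prod_congr rfl fun k _ => ?_)
  · have hc := hcne k
    have h1 := hZfne k; have h2 := hZzne k; have h3 := hZLne k; have h4 := hZRne k
    field_simp
  · have hc := hcne k
    have h1 := hZ3ne k
    field_simp
end Aux7
/-- exact representation of the coarse-grained Gibbs weight
`e^{-βH̄_M(η)} = E[e^{-βH} | F(σ) = η]` for the combined short- and long-range
Hamiltonian via the multiscale decomposition and the Mayer-type error terms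
(one-dimensional periodic lattice, `M` even). -/
theorem statement19 (M Q : ℕ) [NeZero M] (hM : 2 ≤ M) (hMe : Even M) (hQ : 2 ≤ Q)
    (β : ℝ) (hβ : 0 < β)
    (HK WK : Fin M → (Fin (M * Q) → Bool) → ℝ)
    (hHloc : ∀ (k : Fin M) (σ σ' : Fin (M * Q) → Bool),
      (∀ x ∈ cell M Q k, σ x = σ' x) → HK k σ = HK k σ')
    (hWloc : ∀ (k : Fin M) (σ σ' : Fin (M * Q) → Bool),
      (∀ x ∈ cell M Q k ∪ cell M Q (k + 1), σ x = σ' x) → WK k σ = WK k σ')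
    (J : ℤ → ℝ) (hJ : ∀ r, J (-r) = J r)
    (η : Fin M → ℤ)
    (hne : (univ.filter (fun σ : Fin (M * Q) → Bool => cg M Q σ = η)).Nonempty) :
    (∑ σ ∈ univ.filter (fun σ : Fin (M * Q) → Bool => cg M Q σ = η),
        Real.exp (-β * (((∑ k, HK k σ) + ∑ k, WK k σ) + Hlong M Q J σ))) /
      ((univ.filter (fun σ : Fin (M * Q) → Bool => cg M Q σ = η)).card : ℝ)
    = Real.exp (-β * Hlong0 M Q J η) *
        ((∏ k ∈ univ.filter (fun k : Fin M => k.val % 2 = 1),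
            (Zzero M Q β HK η k)⁻¹) *
          ∏ k ∈ univ.filter (fun k : Fin M => k.val % 2 = 0),
            Z3 M Q β HK WK η k) *
        ∑ σ ∈ univ.filter (fun σ : Fin (M * Q) → Bool => cg M Q σ = η),
          ((∏ p ∈ (univ ×ˢ univ : Finset (Fin M × Fin M)).filter (fun p => p.1 ≤ p.2),
              (1 + (Real.exp (-β * DeltaJ M Q J p.1 p.2 σ) - 1))) *
            (∏ k ∈ univ.filter (fun k : Fin M => k.val % 2 = 1),
              (1 + fsOdd M Q β HK WK η k σ))) *
          nuM M Q β HK WK η σ := by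
  classical
  obtain ⟨σ0, hσ0mem⟩ := hne
  have hσ0 : cg M Q σ0 = η := (Finset.mem_filter.mp hσ0mem).2
  have hQ0 : 0 < Q := by omega
  have hM2 : M % 2 = 0 := Nat.even_iff.mp hMe
  have hcard : ((univ.filter (fun σ : Fin (M * Q) → Bool => cg M Q σ = η)).card : ℝ)
      = ∏ k, ((cellCfgs M Q k (η k)).card : ℝ) := by
    rw [card_fiber hQ0 η]
    push_cast
    rfl
  rw [hcard, Finset.sum_div, Finset.mul_sum]
  refine Finset.sum_congr rfl fun σ hσmem => ?_
  have hσ : cg M Q σ = η := (Finset.mem_filter.mp hσmem).2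
  have hPl : (∏ p ∈ (univ ×ˢ univ : Finset (Fin M × Fin M)).filter (fun p => p.1 ≤ p.2),
      (1 + (Real.exp (-β * DeltaJ M Q J p.1 p.2 σ) - 1)))
      = Real.exp (-β * ∑ p ∈ (univ ×ˢ univ : Finset (Fin M × Fin M)).filter
          (fun p => p.1 ≤ p.2), DeltaJ M Q J p.1 p.2 σ) := by
    rw [Finset.mul_sum, Real.exp_sum]
    exact Finset.prod_congr rfl fun p _ => by ring
  have hHl : Real.exp (-β * (((∑ k, HK k σ) + ∑ k, WK k σ) + Hlong M Q J σ))
      = Real.exp (-β * ((∑ k, HK k σ) + ∑ k, WK k σ)) *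
        (Real.exp (-β * Hlong0 M Q J η) *
          Real.exp (-β * ∑ p ∈ (univ ×ˢ univ : Finset (Fin M × Fin M)).filter
            (fun p => p.1 ≤ p.2), DeltaJ M Q J p.1 p.2 σ)) := by
    rw [← Real.exp_add, ← Real.exp_add, Hlong_decomp hQ0 J hJ η σ hσ]
    congr 1
    ring
  calc Real.exp (-β * (((∑ k, HK k σ) + ∑ k, WK k σ) + Hlong M Q J σ))
        / ∏ k, ((cellCfgs M Q k (η k)).card : ℝ)
      = (Real.exp (-β * ((∑ k, HK k σ) + ∑ k, WK k σ))
          / ∏ k, ((cellCfgs M Q k (η k)).card : ℝ)) *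
        (Real.exp (-β * Hlong0 M Q J η) *
          Real.exp (-β * ∑ p ∈ (univ ×ˢ univ : Finset (Fin M × Fin M)).filter
            (fun p => p.1 ≤ p.2), DeltaJ M Q J p.1 p.2 σ)) := by
        rw [hHl]
        ring
    _ = (((∏ k ∈ univ.filter (fun k : Fin M => k.val % 2 = 1), (Zzero M Q β HK η k)⁻¹) *
          ∏ k ∈ univ.filter (fun k : Fin M => k.val % 2 = 0), Z3 M Q β HK WK η k) *
        ((∏ k ∈ univ.filter (fun k : Fin M => k.val % 2 = 1),
            (1 + fsOdd M Q β HK WK η k σ)) * nuM M Q β HK WK η σ)) *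
        (Real.exp (-β * Hlong0 M Q J η) *
          ∏ p ∈ (univ ×ˢ univ : Finset (Fin M × Fin M)).filter (fun p => p.1 ≤ p.2),
            (1 + (Real.exp (-β * DeltaJ M Q J p.1 p.2 σ) - 1))) := by
        rw [short_decomp hM hM2 β HK WK η σ hσ, hPl]
    _ = _ := by ring
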